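/- Under the assumptions n ≥ 13, m = 4/(p−1) ∈ (0,(n−4)/2), Q₄(m) > 0, and Q₄((n−4)/2) − p Q₄(m) ≥ 0, with λ₂ ≤ λ₃ < 0 the two middle roots of 𝒫(λ) = Q₄(m−λ) − pQ₄(m), for every integer k ≥ 1: λ₂ > kλ₃ if and only if 𝒫(2λ*/(k+1)) < 0, where λ* = m − (n−4)/2. Equivalently, λ₂ > kλ₃ iff ℛ_k(p) < 0 where ℛ_k(p) = (p−1)⁴[Q₄((k−1)/(k+1)·4/(p−1) + (n−4)/(k+1)) − p Q₄(4/(p−1))]. -/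

import Mathlib

set_option maxHeartbeats 1000000


/-- Criterion for `λ₂ > kλ₃`: it holds iff `𝒫(2λ*/(k+1)) < 0`, equivalently
iff `ℛ_k(p) < 0`. -/
theorem root_ratio_criterion (n p m lamstar lam2 lam3 : ℝ)
    (hn : 13 ≤ n) (hp : 1 < p)
    (hm : m = 4 / (p - 1)) (hm0 : 0 < m) (hm1 : m < (n - 4) / 2)
    (hlamstar : lamstar = m - (n - 4) / 2)
    (Q : ℝ → ℝ) (hQ : ∀ α : ℝ, Q α = α * (α + 2) * (α + 2 - n) * (α + 4 - n))
    (hQm : 0 < Q m)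
    (hsuper : 0 ≤ Q ((n - 4) / 2) - p * Q m)
    (P : ℝ → ℝ) (hP : ∀ lam : ℝ, P lam = Q (m - lam) - p * Q m)
    (hroot2 : P lam2 = 0) (hroot3 : P lam3 = 0)
    (h2lo : 2 * lamstar < lam2) (h2hi : lam2 ≤ lamstar)
    (h3lo : lamstar ≤ lam3) (h3hi : lam3 < 0)
    (hsum : lam2 + lam3 = 2 * lamstar) :
    ∀ k : ℕ, 1 ≤ k →
      ((lam2 > (k : ℝ) * lam3 ↔ P (2 * lamstar / ((k : ℝ) + 1)) < 0) ∧
       (lam2 > (k : ℝ) * lam3 ↔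
         (p - 1) ^ 4 *
           (Q (((k : ℝ) - 1) / ((k : ℝ) + 1) * (4 / (p - 1)) + (n - 4) / ((k : ℝ) + 1))
             - p * Q (4 / (p - 1))) < 0)) := by
  intro k hk
  have hk1 : (1 : ℝ) ≤ (k : ℝ) := by exact_mod_cast hk
  obtain ⟨c, hc⟩ : ∃ c : ℝ, c = (n - 4) / 2 := ⟨_, rfl⟩
  rw [← hc] at hm1 hlamstar hsuper
  have hc0 : 0 < c := lt_trans hm0 hm1
  have hls : lamstar < 0 := by rw [hlamstar]; linarith
  have hK : (0 : ℝ) < (k : ℝ) + 1 := by linarith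
  have hKne : ((k : ℝ) + 1) ≠ 0 := ne_of_gt hK
  obtain ⟨x, hxdef⟩ : ∃ x : ℝ, x = 2 * lamstar / ((k : ℝ) + 1) := ⟨_, rfl⟩
  have hxK : x * ((k : ℝ) + 1) = 2 * lamstar := by
    rw [hxdef]; field_simp
  have hxlo : lamstar ≤ x := by nlinarith
  have hxhi : x < 0 := by nlinarith
  have expand : ∀ l : ℝ,
      P l = ((l - lamstar) ^ 2 - c ^ 2) * ((l - lamstar) ^ 2 - (c + 2) ^ 2) - p * Q m := by
    intro l
    rw [hP l, hQ (m - l), hlamstar, hc]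
    ring
  obtain ⟨A, hAdef⟩ : ∃ A : ℝ, A = (x - lamstar) ^ 2 := ⟨_, rfl⟩
  obtain ⟨B, hBdef⟩ : ∃ B : ℝ, B = (lam3 - lamstar) ^ 2 := ⟨_, rfl⟩
  have key : P x = (A - B) * (A + B - c ^ 2 - (c + 2) ^ 2) := by
    have h1 := expand x
    have h2 := expand lam3
    rw [← hAdef] at h1
    rw [← hBdef] at h2
    linear_combination h1 - h2 + hroot3
  have hx0 : 0 ≤ x - lamstar := by linarith
  have hxc : x - lamstar < c := by rw [hlamstar]; linarith
  have h30 : 0 ≤ lam3 - lamstar := by linarith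
  have h3c : lam3 - lamstar < c := by rw [hlamstar]; linarith
  have hA : A < c ^ 2 := by
    rw [hAdef]; exact pow_lt_pow_left₀ hxc hx0 (by norm_num)
  have hB : B < c ^ 2 := by
    rw [hBdef]; exact pow_lt_pow_left₀ h3c h30 (by norm_num)
  have hcc : c ^ 2 < (c + 2) ^ 2 := by nlinarith [hc0]
  have hfac : A + B - c ^ 2 - (c + 2) ^ 2 < 0 := by linarith
  have iffAB : P x < 0 ↔ B < A := by
    constructor
    · intro h
      by_contra hab
      push_neg at hab
      have h' : 0 ≤ (-(A - B)) * (-(A + B - c ^ 2 - (c + 2) ^ 2)) :=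
        mul_nonneg (by linarith) (by linarith)
      have h'' : 0 ≤ P x := by rw [key]; nlinarith [h']
      linarith
    · intro h
      rw [key]
      exact mul_neg_of_pos_of_neg (by linarith) hfac
  have iff3x : B < A ↔ lam3 < x := by
    constructor
    · intro h
      by_contra hle
      push_neg at hle
      have h1 : x - lamstar ≤ lam3 - lamstar := by linarith
      have h2 : (x - lamstar) ^ 2 ≤ (lam3 - lamstar) ^ 2 := pow_le_pow_left₀ hx0 h1 2
      rw [← hAdef, ← hBdef] at h2
      linarith
    · intro h
      have h1 : lam3 - lamstar < x - lamstar := by linarith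
      have h2 : (lam3 - lamstar) ^ 2 < (x - lamstar) ^ 2 := pow_lt_pow_left₀ h1 h30 (by norm_num)
      rw [← hAdef, ← hBdef] at h2
      linarith
  have iff2 : lam2 > (k : ℝ) * lam3 ↔ lam3 < x := by
    have hlam2 : lam2 = 2 * lamstar - lam3 := by linarith
    have hx3 : lam3 < x ↔ lam3 * ((k : ℝ) + 1) < 2 * lamstar := by
      rw [← hxK]
      exact (mul_lt_mul_iff_of_pos_right hK).symm
    rw [hx3, hlam2]
    constructor
    · intro h; linarith
    · intro h; linarith
  have first : lam2 > (k : ℝ) * lam3 ↔ P x < 0 := by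
    rw [iff2, iffAB, iff3x]
  rw [← hxdef]
  refine ⟨first, ?_⟩
  have hp1 : p - 1 ≠ 0 := ne_of_gt (by linarith)
  have harg : ((k : ℝ) - 1) / ((k : ℝ) + 1) * (4 / (p - 1)) + (n - 4) / ((k : ℝ) + 1)
      = m - x := by
    rw [hm, hxdef, hlamstar, hm, hc]
    field_simp
    ring
  have hRx : (p - 1) ^ 4 *
      (Q (((k : ℝ) - 1) / ((k : ℝ) + 1) * (4 / (p - 1)) + (n - 4) / ((k : ℝ) + 1))
        - p * Q (4 / (p - 1))) = (p - 1) ^ 4 * P x := by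
    rw [harg, ← hm, hP x]
  rw [hRx]
  have pos4 : 0 < (p - 1) ^ 4 := by positivity
  rw [first]
  constructor
  · intro h; exact mul_neg_of_pos_of_neg pos4 h
  · intro h
    by_contra hge
    push_neg at hge
    have : 0 ≤ (p - 1) ^ 4 * P x := mul_nonneg (le_of_lt pos4) hge
    linarith
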